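/- For μ a probability measure supported in [0,1] with distribution function μ(x), and z in the upper half-plane, ∫_{[0,1]} log(1/(1−tz)) dμ(t) + ∫_{[0,1]} log√(1+t²) dμ(t) = ∫₁^∞ (1/(t−z) − t/(1+t²)) · (1 − μ(1/t)) dt, where the principal branch of the logarithm is used. -/

import Mathlib

open MeasureTheory Complex Set

noncomputable def fz (z : ℂ) (s : ℝ) : ℂ :=
  1 / ((s : ℂ) - z) - (s : ℂ) / (1 + (s : ℂ) ^ 2)

noncomputable def Gz (z : ℂ) (s : ℝ) : ℂ :=
  Complex.log ((s : ℂ) - z) - ((Real.log (1 + s ^ 2) / 2 : ℝ) : ℂ)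

lemma sub_mem_slit {z : ℂ} (hz : 0 < z.im) (s : ℝ) : ((s : ℂ) - z) ∈ slitPlane := by
  rw [Complex.mem_slitPlane_iff]
  right
  simp [sub_eq_zero, hz.ne']

lemma one_add_sq_ne {s : ℝ} : (1 : ℂ) + (s : ℂ) ^ 2 ≠ 0 := by
  have h : (0:ℝ) < 1 + s ^ 2 := by positivity
  have : ((1 + s ^ 2 : ℝ) : ℂ) ≠ 0 := by
    exact_mod_cast h.ne'
  simpa using this

lemma hasDerivAt_Gz {z : ℂ} (hz : 0 < z.im) (s : ℝ) : HasDerivAt (Gz z) (fz z s) s := by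
  have h1 := sub_mem_slit hz s
  have hd1 : HasDerivAt (fun s : ℝ => Complex.log ((s : ℂ) - z)) (((s : ℂ) - z)⁻¹) s := by
    have h := (Complex.hasDerivAt_log h1).comp (s : ℂ) ((hasDerivAt_id (s : ℂ)).sub_const z)
    simpa using h.comp_ofReal
  have h2 : (1 : ℝ) + s ^ 2 ≠ 0 := by positivity
  have hd2 : HasDerivAt (fun s : ℝ => Real.log (1 + s ^ 2) / 2) (s / (1 + s ^ 2)) s := by
    have h := ((Real.hasDerivAt_log h2).comp s
      (((hasDerivAt_id s).pow 2).const_add 1)).div_const 2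
    refine h.congr_deriv ?_
    simp only [id, Nat.cast_ofNat]
    field_simp
    ring
  have h := hd1.sub hd2.ofReal_comp
  refine h.congr_deriv ?_
  unfold fz
  rw [one_div]
  congr 1
  push_cast
  ring

lemma tendsto_Gz {z : ℂ} (hz : 0 < z.im) : Filter.Tendsto (Gz z) Filter.atTop (nhds 0) := by
  have hzs : ∀ s : ℝ, 0 < s → (1 : ℂ) - z / s ≠ 0 := by
    intro s hs h
    rw [sub_eq_zero] at h
    have hs' : (s : ℂ) ≠ 0 := by exact_mod_cast hs.ne'
    rw [eq_comm, div_eq_one_iff_eq hs'] at h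
    rw [h] at hz
    simp at hz
  have heq : ∀ s : ℝ, 0 < s → Gz z s =
      Complex.log (1 - z / s) - ((Real.log (1 + (s⁻¹) ^ 2) / 2 : ℝ) : ℂ) := by
    intro s hs
    have h1 : ((s : ℂ) - z) = (s : ℝ) * ((1 : ℂ) - z / s) := by
      have : (s : ℂ) ≠ 0 := by exact_mod_cast hs.ne'
      field_simp
    have h2 : Complex.log ((s : ℂ) - z) = Real.log s + Complex.log (1 - z / s) := by
      rw [h1, Complex.log_ofReal_mul hs (hzs s hs)]
    have h3 : Real.log (1 + s ^ 2) = 2 * Real.log s + Real.log (1 + (s⁻¹) ^ 2) := by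
      have hu : (0:ℝ) < 1 + (s⁻¹) ^ 2 := by positivity
      have hss : (1 + s ^ 2 : ℝ) = s ^ 2 * (1 + (s⁻¹) ^ 2) := by
        field_simp
        ring
      rw [hss, Real.log_mul (by positivity) hu.ne', Real.log_pow]
      push_cast
      ring
    unfold Gz
    rw [h2, h3]
    push_cast
    ring
  have ht1 : Filter.Tendsto (fun s : ℝ => Complex.log (1 - z / s)) Filter.atTop (nhds 0) := by
    have hinv : Filter.Tendsto (fun s : ℝ => ((s⁻¹ : ℝ) : ℂ)) Filter.atTop (nhds 0) := by
      have := tendsto_inv_atTop_zero (𝕜 := ℝ)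
      have := (Complex.continuous_ofReal.tendsto 0).comp this
      simpa [Function.comp_def] using this
    have hdiv : Filter.Tendsto (fun s : ℝ => (1 : ℂ) - z / s) Filter.atTop (nhds 1) := by
      have : Filter.Tendsto (fun s : ℝ => z / (s : ℂ)) Filter.atTop (nhds 0) := by
        have h := hinv.const_mul z
        simp only [mul_zero] at h
        refine h.congr fun s => ?_
        rw [div_eq_mul_inv, Complex.ofReal_inv]
      have h := this.const_sub 1
      simpa using h
    have hcont : ContinuousAt Complex.log 1 := continuousAt_clog one_mem_slitPlane
    have := hcont.tendsto.comp hdiv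
    simpa [Function.comp_def] using this
  have ht2 : Filter.Tendsto (fun s : ℝ => ((Real.log (1 + (s⁻¹) ^ 2) / 2 : ℝ) : ℂ))
      Filter.atTop (nhds 0) := by
    have hinv : Filter.Tendsto (fun s : ℝ => (1 + (s⁻¹) ^ 2 : ℝ)) Filter.atTop (nhds 1) := by
      have h := (tendsto_inv_atTop_zero (𝕜 := ℝ)).pow 2
      have h2 := h.const_add 1
      simpa using h2
    have hcont : ContinuousAt Real.log 1 := Real.continuousAt_log one_ne_zero
    have h := (hcont.tendsto.comp hinv).div_const 2
    simp only [Real.log_one, zero_div] at h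
    have := (Complex.continuous_ofReal.tendsto 0).comp h
    simpa [Function.comp_def] using this
  have := ht1.sub ht2
  simp only [sub_zero] at this
  refine this.congr' ?_
  filter_upwards [Filter.eventually_gt_atTop 0] with s hs
  exact (heq s hs).symm

lemma sub_ne {z : ℂ} (hz : 0 < z.im) (s : ℝ) : ((s : ℂ) - z) ≠ 0 := by
  intro h
  rw [sub_eq_zero] at h
  rw [← h] at hz
  simp at hz
lemma continuous_fz {z : ℂ} (hz : 0 < z.im) : Continuous (fz z) := by
  unfold fz
  refine Continuous.sub ?_ ?_
  · exact continuous_const.div (by continuity) (fun s => sub_ne hz s)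
  · exact Complex.continuous_ofReal.div (by continuity) (fun s => one_add_sq_ne)

lemma integrableOn_fz {z : ℂ} (hz : 0 < z.im) : IntegrableOn (fz z) (Ici 1) := by
  set A : ℝ := 2 * ‖z‖ + 2 with hA
  have hA1 : (1:ℝ) ≤ A := by
    have := norm_nonneg z
    nlinarith
  have hsplit : Ici (1:ℝ) = Icc 1 A ∪ Ioi A := (Icc_union_Ioi_eq_Ici hA1).symm
  rw [hsplit]
  refine IntegrableOn.union ?_ ?_
  · exact ((continuous_fz hz).continuousOn).integrableOn_compact isCompact_Icc
  · -- bound by C / s^2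
    have hA0 : (0:ℝ) < A := lt_of_lt_of_le one_pos hA1
    have hbound : ∀ s ∈ Ioi A, ‖fz z s‖ ≤ (2 * (1 + ‖z‖)) * (s ^ 2)⁻¹ := by
      intro s hs
      simp only [mem_Ioi] at hs
      have hs0 : (0:ℝ) < s := lt_trans hA0 hs
      have hkey : fz z s = (1 + (s:ℂ) * z) / (((s : ℂ) - z) * (1 + (s : ℂ) ^ 2)) := by
        unfold fz
        field_simp [sub_ne hz s, one_add_sq_ne]
        ring
      rw [hkey]
      rw [norm_div, norm_mul]
      have h1 : ‖1 + (s:ℂ) * z‖ ≤ s * (1 + ‖z‖) := by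
        calc ‖1 + (s:ℂ) * z‖ ≤ 1 + ‖(s:ℂ) * z‖ :=
              (norm_add_le _ _).trans (by simp)
        _ = 1 + s * ‖z‖ := by
              rw [norm_mul, Complex.norm_real, Real.norm_eq_abs, abs_of_pos hs0]
        _ ≤ s * (1 + ‖z‖) := by nlinarith
      have h2 : s / 2 ≤ ‖(s:ℂ) - z‖ := by
        have : (s:ℝ) - ‖z‖ ≤ ‖(s:ℂ) - z‖ := by
          have h := norm_sub_norm_le ((s:ℂ)) z
          rw [Complex.norm_real, Real.norm_eq_abs, abs_of_pos hs0] at h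
          exact h
        have hsA : 2 * ‖z‖ + 2 < s := hs
        linarith
      have h3 : s ^ 2 ≤ ‖1 + (s:ℂ) ^ 2‖ := by
        have : ((1:ℂ) + (s:ℂ)^2) = ((1 + s^2 : ℝ) : ℂ) := by push_cast; ring
        rw [this, Complex.norm_real, Real.norm_eq_abs, abs_of_pos (by positivity)]
        nlinarith
      have hpos2 : (0:ℝ) < ‖(s:ℂ) - z‖ := norm_pos_iff.mpr (sub_ne hz s)
      have hpos3 : (0:ℝ) < ‖1 + (s:ℂ)^2‖ := norm_pos_iff.mpr one_add_sq_ne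
      calc ‖1 + (s:ℂ) * z‖ / (‖(s:ℂ) - z‖ * ‖1 + (s:ℂ)^2‖)
          ≤ (s * (1 + ‖z‖)) / ((s/2) * s^2) := by
            exact div_le_div₀ (by positivity) h1 (by positivity)
              (mul_le_mul h2 h3 (by positivity) hpos2.le)
        _ = (2 * (1 + ‖z‖)) * (s ^ 2)⁻¹ := by
            field_simp
    have hint : IntegrableOn (fun s : ℝ => (2 * (1 + ‖z‖)) * s ^ (-2:ℝ)) (Ioi A) :=
      (integrableOn_Ioi_rpow_of_lt (by norm_num) hA0).const_mul _
    have hint2 : IntegrableOn (fun s : ℝ => (2 * (1 + ‖z‖)) * (s ^ 2)⁻¹) (Ioi A) := by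
      refine hint.congr_fun (fun s hs => ?_) measurableSet_Ioi
      have hs0 : (0:ℝ) < s := lt_trans hA0 hs
      beta_reduce
      rw [Real.rpow_neg hs0.le, Real.rpow_two]
    refine Integrable.mono' hint2 ((continuous_fz hz).aestronglyMeasurable) ?_
    exact (ae_restrict_iff' measurableSet_Ioi).2 (Filter.Eventually.of_forall hbound)

lemma integral_fz_Ioi {z : ℂ} (hz : 0 < z.im) {a : ℝ} (ha : 1 ≤ a) :
    ∫ s in Ioi a, fz z s = - Gz z a := by
  have h := integral_Ioi_of_hasDerivAt_of_tendsto' (f := Gz z) (f' := fz z)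
    (fun x _ => hasDerivAt_Gz hz x)
    ((integrableOn_fz hz).mono_set (fun x hx => mem_Ici.mpr (le_trans ha (le_of_lt hx))))
    (tendsto_Gz hz)
  rw [h]
  ring

lemma im_one_sub_mul {z : ℂ} (hz : 0 < z.im) {t : ℝ} (ht : 0 < t) :
    ((1 : ℂ) - (t:ℂ) * z).im ≠ 0 := by
  have h : ((1 : ℂ) - (t:ℂ) * z).im = -(t * z.im) := by
    simp [Complex.sub_im, Complex.mul_im]
  rw [h]
  have : 0 < t * z.im := mul_pos ht hz
  linarith

lemma one_sub_mul_ne {z : ℂ} (hz : 0 < z.im) {t : ℝ} (ht : 0 < t) :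
    (1 : ℂ) - (t:ℂ) * z ≠ 0 := by
  intro h
  have := im_one_sub_mul hz ht
  rw [h] at this
  simp at this

lemma boundary {z : ℂ} (hz : 0 < z.im) {t : ℝ} (ht : 0 < t) :
    - Gz z (1/t) =
      Complex.log (1 / (1 - (t:ℂ) * z)) + ((Real.log (Real.sqrt (1 + t^2)) : ℝ) : ℂ) := by
  have h1mz := one_sub_mul_ne hz ht
  have harg : ((1:ℂ) - (t:ℂ) * z).arg ≠ Real.pi := by
    simp only [ne_eq, Complex.arg_eq_pi_iff, not_and]
    intro _ h
    exact im_one_sub_mul hz ht h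
  have hinvt : (0:ℝ) < 1/t := by positivity
  have hsplit : (((1/t : ℝ)) : ℂ) - z = ((1/t : ℝ) : ℂ) * (1 - (t:ℂ) * z) := by
    have htC : (t:ℂ) ≠ 0 := by exact_mod_cast ht.ne'
    push_cast
    rw [mul_sub, mul_one]
    congr 1
    rw [one_div, ← mul_assoc, inv_mul_cancel₀ htC, one_mul]
  have hlog1 : Complex.log (((1/t : ℝ) : ℂ) - z) =
      ((Real.log (1/t) : ℝ) : ℂ) + Complex.log (1 - (t:ℂ) * z) := by
    rw [hsplit, Complex.log_ofReal_mul hinvt h1mz]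
  have hlog2 : Real.log (1 + (1/t)^2) = Real.log (1 + t^2) - 2 * Real.log t := by
    have he : (1 + (1/t)^2 : ℝ) = (1 + t^2) / t^2 := by
      field_simp
      ring
    rw [he, Real.log_div (by positivity) (by positivity), Real.log_pow]
    push_cast
    ring
  have hlog3 : Complex.log (1 / (1 - (t:ℂ) * z)) = - Complex.log (1 - (t:ℂ) * z) := by
    rw [one_div, Complex.log_inv _ harg]
  have hsqrt : Real.log (Real.sqrt (1 + t^2)) = Real.log (1 + t^2) / 2 :=
    Real.log_sqrt (by positivity)
  have hlogt : Real.log (1/t) = - Real.log t := by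
    rw [one_div, Real.log_inv]
  unfold Gz
  rw [hlog1, hlog2, hlog3, hsqrt, hlogt]
  push_cast
  ring

lemma pointwise {z : ℂ} (hz : 0 < z.im) {t : ℝ} (ht : t ∈ Icc (0:ℝ) 1) :
    (∫ s in Ioi (1:ℝ), Set.indicator {s : ℝ | 1/s ≤ t} (fz z) s) =
      Complex.log (1 / (1 - (t:ℂ) * z)) + ((Real.log (Real.sqrt (1 + t^2)) : ℝ) : ℂ) := by
  rcases eq_or_lt_of_le ht.1 with h0 | h0
  · rw [← h0]
    have hzero : ∀ s ∈ Ioi (1:ℝ), Set.indicator {s : ℝ | 1/s ≤ (0:ℝ)} (fz z) s = 0 := by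
      intro s hs
      apply Set.indicator_of_notMem
      simp only [mem_setOf_eq, not_le]
      have : (0:ℝ) < s := lt_trans one_pos hs
      positivity
    rw [setIntegral_congr_fun measurableSet_Ioi hzero]
    simp
  · have hmeas : MeasurableSet {s : ℝ | 1/s ≤ t} :=
      measurableSet_le (measurable_const.div measurable_id) measurable_const
    rw [setIntegral_indicator hmeas]
    have h1t : (1:ℝ) ≤ 1/t := by
      rw [le_div_iff₀ h0]
      simpa using ht.2
    have hset : Ioi (1:ℝ) ∩ {s : ℝ | 1/s ≤ t} = Ioi 1 ∩ Ici (1/t) := by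
      ext s
      simp only [mem_inter_iff, mem_Ioi, mem_setOf_eq, mem_Ici]
      constructor
      · rintro ⟨hs, hst⟩
        refine ⟨hs, ?_⟩
        rw [div_le_iff₀ h0]
        rw [div_le_iff₀ (lt_trans one_pos hs)] at hst
        linarith [hst]
      · rintro ⟨hs, hst⟩
        refine ⟨hs, ?_⟩
        rw [div_le_iff₀ (lt_trans one_pos hs)]
        rw [div_le_iff₀ h0] at hst
        linarith [hst]
    have hae : (Ioi 1 ∩ Ici (1/t) : Set ℝ) =ᵐ[volume] (Ioi (1/t) : Set ℝ) := by
      rw [MeasureTheory.ae_eq_set]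
      constructor
      · refine measure_mono_null (fun s hs => ?_) (measure_singleton (1/t))
        rcases hs with ⟨⟨hs1, hs2⟩, hs3⟩
        simp only [mem_Ioi, not_lt] at hs3
        exact le_antisymm hs3 hs2
      · refine measure_mono_null (fun s hs => ?_) (measure_empty (μ := volume))
        rcases hs with ⟨hs1, hs2⟩
        rw [mem_Ioi] at hs1
        exact absurd ⟨mem_Ioi.mpr (lt_of_le_of_lt h1t hs1), mem_Ici.mpr (le_of_lt hs1)⟩ hs2
    rw [hset, setIntegral_congr_set hae, integral_fz_Ioi hz h1t]
    exact boundary hz h0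

lemma im_one_sub_mul' (t : ℝ) (z : ℂ) : ((1 : ℂ) - (t:ℂ) * z).im = -(t * z.im) := by
  simp [Complex.sub_im, Complex.mul_im]

lemma one_sub_mul_ne' {z : ℂ} (hz : 0 < z.im) (t : ℝ) : (1 : ℂ) - (t:ℂ) * z ≠ 0 := by
  rcases eq_or_ne t 0 with rfl | ht
  · simp
  · intro h
    have him := im_one_sub_mul' t z
    rw [h] at him
    simp only [Complex.zero_im] at him
    exact (mul_ne_zero ht hz.ne') (by linarith)

lemma mem_slit_aux {z : ℂ} (hz : 0 < z.im) (t : ℝ) : 1 / (1 - (t:ℂ) * z) ∈ slitPlane := by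
  rcases eq_or_ne t 0 with rfl | ht
  · simp
  · rw [Complex.mem_slitPlane_iff]
    right
    rw [one_div, Complex.inv_im, im_one_sub_mul' t z]
    have hne := one_sub_mul_ne' hz t
    have hnsq : Complex.normSq (1 - (t:ℂ) * z) ≠ 0 :=
      fun h => hne (Complex.normSq_eq_zero.mp h)
    rw [neg_neg]
    exact div_ne_zero (mul_ne_zero ht hz.ne') hnsq

theorem stmt_12 (μ : Measure ℝ) [IsProbabilityMeasure μ]
    (hsupp : μ (Set.Icc (0 : ℝ) 1)ᶜ = 0)
    (z : ℂ) (hz : 0 < z.im) :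
    (∫ t in Set.Icc (0 : ℝ) 1, Complex.log (1 / (1 - (t : ℂ) * z)) ∂μ) +
      ((∫ t in Set.Icc (0 : ℝ) 1, Real.log (Real.sqrt (1 + t ^ 2)) ∂μ : ℝ) : ℂ) =
    ∫ t in Set.Ioi (1 : ℝ),
      (1 / ((t : ℂ) - z) - (t : ℂ) / (1 + (t : ℂ) ^ 2)) *
        ((1 : ℂ) - ((μ (Set.Iio (1 / t))).toReal : ℂ)) := by
  set ν := μ.restrict (Icc (0:ℝ) 1) with hν
  set M := volume.restrict (Ioi (1:ℝ)) with hM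
  set S : Set (ℝ × ℝ) := {q : ℝ × ℝ | 1/q.1 ≤ q.2} with hSdef
  have hSmeas : MeasurableSet S :=
    measurableSet_le (measurable_const.div measurable_fst) measurable_snd
  set k : ℝ × ℝ → ℂ := S.indicator (fun q => fz z q.1) with hk
  -- product integrability
  have hfst : Integrable (fun q : ℝ × ℝ => fz z q.1) (M.prod ν) := by
    have h1 : IntegrableOn (fz z) (Ioi 1) := (integrableOn_fz hz).mono_set Ioi_subset_Ici_self
    have h2 : Integrable (fz z) ((ν univ) • M) :=
      h1.smul_measure (measure_lt_top ν univ).ne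
    have h3 : (M.prod ν).map Prod.fst = (ν univ) • M := Measure.map_fst_prod
    have h4 : Integrable (fz z) ((M.prod ν).map Prod.fst) := by rw [h3]; exact h2
    have h5 := (integrable_map_measure ((continuous_fz hz).aestronglyMeasurable)
      measurable_fst.aemeasurable).mp h4
    exact h5
  have hkint : Integrable k (M.prod ν) := hfst.indicator hSmeas
  -- pointwise RHS rewriting
  have hRHS : EqOn
      (fun s : ℝ => (1 / ((s : ℂ) - z) - (s : ℂ) / (1 + (s : ℂ) ^ 2)) *
        ((1 : ℂ) - ((μ (Set.Iio (1 / s))).toReal : ℂ)))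
      (fun s : ℝ => ∫ t, k (s, t) ∂ν) (Ioi 1) := by
    intro s hs
    have hks : (fun t => k (s, t)) = (Ici (1/s)).indicator (fun _ => fz z s) := by
      funext t
      simp only [hk, hSdef, Set.indicator_apply, mem_setOf_eq, mem_Ici]
    simp only
    rw [hks, integral_indicator_const _ measurableSet_Ici]
    have hν1 : ν (Ici (1/s)) = μ (Ici (1/s)) := by
      rw [hν, Measure.restrict_apply measurableSet_Ici]
      exact measure_inter_conull' (measure_mono_null (fun x hx => hx.2) hsupp)
    have hcompl : μ (Iio (1/s)) = 1 - μ (Ici (1/s)) := by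
      rw [← Set.compl_Ici]
      exact prob_compl_eq_one_sub measurableSet_Ici
    rw [measureReal_def, hν1, hcompl, ENNReal.toReal_sub_of_le prob_le_one ENNReal.one_ne_top]
    rw [Complex.real_smul]
    show (1 / ((s : ℂ) - z) - (s : ℂ) / (1 + (s : ℂ) ^ 2)) * _ = _
    simp only [ENNReal.toReal_one]
    push_cast
    unfold fz
    ring
  -- continuity of LHS integrands
  have hcont1 : Continuous (fun t : ℝ => Complex.log (1 / (1 - (t:ℂ) * z))) := by
    have hinner : Continuous (fun t : ℝ => 1 / (1 - (t:ℂ) * z)) :=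
      continuous_const.div (by continuity) (fun t => one_sub_mul_ne' hz t)
    exact hinner.clog (fun t => mem_slit_aux hz t)
  have hcont2 : Continuous (fun t : ℝ => Real.log (Real.sqrt (1 + t ^ 2))) := by
    refine continuous_iff_continuousAt.mpr (fun t => ?_)
    have h1 : (0:ℝ) < 1 + t ^ 2 := by positivity
    have hs : Continuous (fun t : ℝ => Real.sqrt (1 + t ^ 2)) := by continuity
    exact (Real.continuousAt_log (by positivity)).comp hs.continuousAt
  have hint1 : Integrable (fun t : ℝ => Complex.log (1 / (1 - (t:ℂ) * z))) ν :=
    hcont1.continuousOn.integrableOn_compact isCompact_Icc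
  have hint2 : Integrable (fun t : ℝ => Real.log (Real.sqrt (1 + t ^ 2))) ν :=
    hcont2.continuousOn.integrableOn_compact isCompact_Icc
  have hintB : Integrable (fun t : ℝ => ((Real.log (Real.sqrt (1 + t ^ 2)) : ℝ) : ℂ)) ν :=
    hint2.ofReal
  -- a.e. identification of inner integral after swap
  have step3 : (fun t : ℝ => ∫ s, k (s, t) ∂M) =ᵐ[ν]
      (fun t : ℝ => Complex.log (1 / (1 - (t:ℂ) * z)) +
        ((Real.log (Real.sqrt (1 + t ^ 2)) : ℝ) : ℂ)) := by
    filter_upwards [ae_restrict_mem measurableSet_Icc] with t ht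
    have hkt : (fun s => k (s, t)) = Set.indicator {s : ℝ | 1/s ≤ t} (fz z) := by
      funext s
      simp only [hk, hSdef, Set.indicator_apply, mem_setOf_eq]
    rw [hkt]
    exact pointwise hz ht
  -- chain
  have hkint' : Integrable (Function.uncurry (fun s t => k (s, t))) (M.prod ν) := by
    simpa [Function.uncurry_def] using hkint
  calc (∫ t in Set.Icc (0 : ℝ) 1, Complex.log (1 / (1 - (t : ℂ) * z)) ∂μ) +
      ((∫ t in Set.Icc (0 : ℝ) 1, Real.log (Real.sqrt (1 + t ^ 2)) ∂μ : ℝ) : ℂ)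
      = ∫ t, (Complex.log (1 / (1 - (t:ℂ) * z)) +
          ((Real.log (Real.sqrt (1 + t ^ 2)) : ℝ) : ℂ)) ∂ν := by
        have hco : ((∫ t in Set.Icc (0:ℝ) 1, Real.log (Real.sqrt (1 + t ^ 2)) ∂μ : ℝ) : ℂ) =
            ∫ t in Set.Icc (0:ℝ) 1, ((Real.log (Real.sqrt (1 + t ^ 2)) : ℝ) : ℂ) ∂μ :=
          (integral_ofReal (𝕜 := ℂ)).symm
        rw [hco]
        exact (integral_add hint1 hintB).symm
    _ = ∫ t, (∫ s, k (s, t) ∂M) ∂ν := (integral_congr_ae step3).symm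
    _ = ∫ s, (∫ t, k (s, t) ∂ν) ∂M := (integral_integral_swap hkint').symm
    _ = ∫ t in Set.Ioi (1 : ℝ),
      (1 / ((t : ℂ) - z) - (t : ℂ) / (1 + (t : ℂ) ^ 2)) *
        ((1 : ℂ) - ((μ (Set.Iio (1 / t))).toReal : ℂ)) := by
        rw [hM]
        exact (setIntegral_congr_fun measurableSet_Ioi hRHS).symm
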